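/- arXiv:2007.10852 — 5 statements merged into one kernel-verified Lean document; each statement's English description precedes it below -/
import Mathlib

section
/- Let X be a g-complete topological space, where g : X × X → ℝ is a continuous function such that for all x, y, z ∈ X: g(x,y) = 0 if and only if x = y, |g(x,y)| = |g(y,x)|, and |g(x,z)| ≤ |g(x,y)| + |g(y,z)|. Let (A, B) be a pair of nonempty subsets of X such that A_g is nonempty and g-closed. Let T : A → B be a topologically proximal weak contraction with respect to g with constants β ∈ (0,1) and N ≥ 0, such that T(A_g) ⊆ B_g. Then T has a best proximity point p* ∈ A_g; moreover, every sequence (p_n) with p₀ ∈ A_g and |g(p_{n+1}, T(p_n))| = D_g(A,B) for all n ≥ 0 g-converges to a best proximity point of T. -/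
open Filter Topology

/-- A sequence `x` in `X` `g`-converges to `p` if `|g (x n) p| → 0`. -/
def GConv {X : Type*} (g : X → X → ℝ) (x : ℕ → X) (p : X) : Prop :=
  Tendsto (fun n => |g (x n) p|) atTop (𝓝 0)

/-- A sequence `x` in `X` is `g`-Cauchy if `|g (x n) (x m)| → 0` as `n, m → ∞`. -/
def GCauchy {X : Type*} (g : X → X → ℝ) (x : ℕ → X) : Prop :=
  ∀ ε > (0 : ℝ), ∃ k : ℕ, ∀ n ≥ k, ∀ m ≥ k, |g (x n) (x m)| < ε

/-- `X` is `g`-complete if every `g`-Cauchy sequence `g`-converges to some point of `X`. -/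
def GComplete {X : Type*} (g : X → X → ℝ) : Prop :=
  ∀ x : ℕ → X, GCauchy g x → ∃ p : X, GConv g x p

/-- `D_g(A,B) = inf {|g x y| : x ∈ A, y ∈ B}`. -/
noncomputable def Dg {X : Type*} (g : X → X → ℝ) (A B : Set X) : ℝ :=
  sInf {r : ℝ | ∃ x ∈ A, ∃ y ∈ B, r = |g x y|}

/-- `A_g = {x ∈ A : |g x y| = D_g(A,B) for some y ∈ B}`. -/
noncomputable def proxA {X : Type*} (g : X → X → ℝ) (A B : Set X) : Set X :=
  {x ∈ A | ∃ y ∈ B, |g x y| = Dg g A B}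

/-- `B_g = {y ∈ B : |g x y| = D_g(A,B) for some x ∈ A}`. -/
noncomputable def proxB {X : Type*} (g : X → X → ℝ) (A B : Set X) : Set X :=
  {y ∈ B | ∃ x ∈ A, |g x y| = Dg g A B}

/-- A subset `S` of `X` is `g`-closed if every sequence in `S` which `g`-converges
to a point of `X` has its limit in `S`. -/
def GClosed {X : Type*} (g : X → X → ℝ) (S : Set X) : Prop :=
  ∀ x : ℕ → X, (∀ n, x n ∈ S) → ∀ p : X, GConv g x p → p ∈ S

/-- `f : A → B` is a topologically proximal weak contraction with respect to `g`
with constants `β` and `N`. -/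
def TopProxWeakContraction {X : Type*} (g : X → X → ℝ) (A B : Set X) (f : X → X)
    (β N : ℝ) : Prop :=
  ∀ x₁ ∈ A, ∀ x₂ ∈ A, ∀ u₁ ∈ A, ∀ u₂ ∈ A,
    |g u₁ (f x₁)| = Dg g A B → |g u₂ (f x₂)| = Dg g A B →
    |g u₁ u₂| ≤ β * |g x₁ x₂| + N * |g x₂ u₁|

theorem aux_key {X : Type*} (g : X → X → ℝ)
    (hzero : ∀ x y : X, g x y = 0 ↔ x = y)
    (hsymm : ∀ x y : X, |g x y| = |g y x|)
    (htri : ∀ x y z : X, |g x z| ≤ |g x y| + |g y z|)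
    (hcomp : GComplete g)
    (A B : Set X)
    (hAgclosed : GClosed g (proxA g A B))
    (T : X → X)
    (β N : ℝ) (hβ : 0 < β) (hβ1 : β < 1) (hN : 0 ≤ N)
    (hT : TopProxWeakContraction g A B T β N)
    (hTprox : Set.MapsTo T (proxA g A B) (proxB g A B))
    (p : ℕ → X) (h0 : p 0 ∈ proxA g A B)
    (hp : ∀ n : ℕ, p (n + 1) ∈ proxA g A B ∧ |g (p (n + 1)) (T (p n))| = Dg g A B) :
    ∃ q ∈ proxA g A B, |g q (T q)| = Dg g A B ∧ GConv g p q := by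
  have pAg : ∀ n, p n ∈ proxA g A B := by
    intro n; cases n with
    | zero => exact h0
    | succ m => exact (hp m).1
  have pInA : ∀ n, p n ∈ A := fun n => (pAg n).1
  set d : ℕ → ℝ := fun n => |g (p n) (p (n + 1))| with hd_def
  have hd0 : ∀ n, 0 ≤ d n := fun n => abs_nonneg _
  have hstep : ∀ n, d (n + 1) ≤ β * d n := by
    intro n
    have h := hT (p n) (pInA n) (p (n + 1)) (pInA (n + 1)) (p (n + 1)) (pInA (n + 1))
      (p (n + 2)) (pInA (n + 2)) (hp n).2 (hp (n + 1)).2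
    have hz : g (p (n + 1)) (p (n + 1)) = 0 := (hzero _ _).mpr rfl
    simpa [hd_def, hz] using h
  have hgeo : ∀ n, d n ≤ β ^ n * d 0 := by
    intro n; induction n with
    | zero => simp
    | succ m ih =>
      calc d (m + 1) ≤ β * d m := hstep m
        _ ≤ β * (β ^ m * d 0) := by nlinarith [hd0 m]
        _ = β ^ (m + 1) * d 0 := by ring
  have hsum : ∀ n k, |g (p n) (p (n + k))| ≤ ∑ i ∈ Finset.range k, d (n + i) := by
    intro n k; induction k with
    | zero => simp [(hzero (p n) (p n)).mpr rfl]
    | succ m ih =>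
      calc |g (p n) (p (n + (m + 1)))| ≤ |g (p n) (p (n + m))| + |g (p (n + m)) (p (n + m + 1))| :=
            htri (p n) (p (n + m)) (p (n + m + 1))
        _ ≤ (∑ i ∈ Finset.range m, d (n + i)) + d (n + m) := by
            exact add_le_add ih le_rfl
        _ = ∑ i ∈ Finset.range (m + 1), d (n + i) := by
            rw [Finset.sum_range_succ]
  set c : ℝ := d 0 / (1 - β) with hc
  have hc0 : 0 ≤ c := div_nonneg (hd0 0) (by linarith)
  have hbound : ∀ n k, |g (p n) (p (n + k))| ≤ c * β ^ n := by
    intro n k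
    refine (hsum n k).trans ?_
    have h1 : ∀ i ∈ Finset.range k, d (n + i) ≤ d 0 * β ^ n * β ^ i := by
      intro i _
      calc d (n + i) ≤ β ^ (n + i) * d 0 := hgeo (n + i)
        _ = d 0 * β ^ n * β ^ i := by rw [pow_add]; ring
    calc (∑ i ∈ Finset.range k, d (n + i)) ≤ ∑ i ∈ Finset.range k, d 0 * β ^ n * β ^ i :=
          Finset.sum_le_sum h1
      _ = d 0 * β ^ n * ∑ i ∈ Finset.range k, β ^ i := by rw [Finset.mul_sum]
      _ ≤ d 0 * β ^ n * (1 / (1 - β)) := by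
          have hsle : ∑ i ∈ Finset.range k, β ^ i ≤ 1 / (1 - β) := by
            have h1β : (0:ℝ) < 1 - β := by linarith
            have hβk : (0:ℝ) ≤ β ^ k := by positivity
            rw [geom_sum_eq hβ1.ne]
            rw [show (β ^ k - 1) / (β - 1) = (1 - β ^ k) / (1 - β) by
              rw [← neg_div_neg_eq]; ring_nf]
            exact div_le_div₀ zero_le_one (by linarith) h1β le_rfl
          have : 0 ≤ d 0 * β ^ n := by positivity
          nlinarith
      _ = c * β ^ n := by rw [hc]; ring
  have hbound' : ∀ n m, n ≤ m → |g (p n) (p m)| ≤ c * β ^ n := by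
    intro n m hnm
    obtain ⟨k, rfl⟩ := Nat.exists_eq_add_of_le hnm
    exact hbound n k
  have hcauchy : GCauchy g p := by
    intro ε hε
    have htend : Tendsto (fun n => c * β ^ n) atTop (𝓝 0) := by
      simpa using (tendsto_pow_atTop_nhds_zero_of_lt_one (le_of_lt hβ) hβ1).const_mul c
    obtain ⟨k, hk⟩ := (htend.eventually (eventually_lt_nhds hε)).exists_forall_of_atTop
    refine ⟨k, fun n hn m hm => ?_⟩
    rcases le_total n m with h | h
    · exact lt_of_le_of_lt ((hbound' n m h).trans
        (by nlinarith [pow_le_pow_of_le_one (le_of_lt hβ) (le_of_lt hβ1) hn])) (hk k le_rfl)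
    · rw [hsymm]
      exact lt_of_le_of_lt ((hbound' m n h).trans
        (by nlinarith [pow_le_pow_of_le_one (le_of_lt hβ) (le_of_lt hβ1) hm])) (hk k le_rfl)
  obtain ⟨q, hq⟩ := hcomp p hcauchy
  have hqA : q ∈ proxA g A B := hAgclosed p pAg q hq
  obtain ⟨hTqB, u, huA, hu⟩ := hTprox hqA
  have hest : ∀ n, |g q u| ≤ (1 + N) * |g (p (n + 1)) q| + β * |g (p n) q| := by
    intro n
    have h1 := hT (p n) (pInA n) q hqA.1 (p (n + 1)) (pInA (n + 1)) u huA (hp n).2 hu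
    have h2 := htri q (p (n + 1)) u
    have h3 : |g q (p (n + 1))| = |g (p (n + 1)) q| := hsymm _ _
    nlinarith [abs_nonneg (g (p (n + 1)) q)]
  have htend2 : Tendsto (fun n => (1 + N) * |g (p (n + 1)) q| + β * |g (p n) q|) atTop (𝓝 0) := by
    have hshift : Tendsto (fun n => |g (p (n + 1)) q|) atTop (𝓝 0) :=
      hq.comp (tendsto_add_atTop_nat 1)
    have := (hshift.const_mul (1 + N)).add (hq.const_mul β)
    simpa using this
  have hqu : |g q u| ≤ 0 := ge_of_tendsto' htend2 hest
  have : g q u = 0 := abs_eq_zero.mp (le_antisymm hqu (abs_nonneg _))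
  have hqu' : q = u := (hzero _ _).mp this
  rw [← hqu'] at hu
  exact ⟨q, hqA, hu, hq⟩

theorem stmt_3 {X : Type*} [TopologicalSpace X] (g : X → X → ℝ)
    (hg : Continuous (Function.uncurry g))
    (hzero : ∀ x y : X, g x y = 0 ↔ x = y)
    (hsymm : ∀ x y : X, |g x y| = |g y x|)
    (htri : ∀ x y z : X, |g x z| ≤ |g x y| + |g y z|)
    (hcomp : GComplete g)
    (A B : Set X) (hA : A.Nonempty) (hB : B.Nonempty)
    (hAg : (proxA g A B).Nonempty) (hAgclosed : GClosed g (proxA g A B))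
    (T : X → X) (hTAB : Set.MapsTo T A B)
    (β N : ℝ) (hβ : 0 < β) (hβ1 : β < 1) (hN : 0 ≤ N)
    (hT : TopProxWeakContraction g A B T β N)
    (hTprox : Set.MapsTo T (proxA g A B) (proxB g A B)) :
    (∃ p ∈ proxA g A B, |g p (T p)| = Dg g A B) ∧
      ∀ p : ℕ → X, p 0 ∈ proxA g A B →
        (∀ n : ℕ, p (n + 1) ∈ proxA g A B ∧ |g (p (n + 1)) (T (p n))| = Dg g A B) →
        ∃ q ∈ proxA g A B, |g q (T q)| = Dg g A B ∧ GConv g p q := by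
  have key := aux_key g hzero hsymm htri hcomp A B hAgclosed T β N hβ hβ1 hN hT hTprox
  have step : ∀ x ∈ proxA g A B, ∃ y, y ∈ proxA g A B ∧ |g y (T x)| = Dg g A B := by
    intro x hx
    obtain ⟨hTxB, u, huA, hu⟩ := hTprox hx
    exact ⟨u, ⟨huA, T x, hTxB, hu⟩, hu⟩
  choose F hF1 hF2 using step
  constructor
  · obtain ⟨p0, hp0⟩ := hAg
    let seq : ℕ → {x // x ∈ proxA g A B} := fun n =>
      Nat.rec ⟨p0, hp0⟩ (fun _ q => ⟨F q.1 q.2, hF1 q.1 q.2⟩) n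
    set p : ℕ → X := fun n => (seq n).1 with hp_def
    have h0 : p 0 ∈ proxA g A B := hp0
    have hps : ∀ n : ℕ, p (n + 1) ∈ proxA g A B ∧ |g (p (n + 1)) (T (p n))| = Dg g A B :=
      fun n => ⟨(seq (n + 1)).2, hF2 (seq n).1 (seq n).2⟩
    obtain ⟨q, hqA, hq, _⟩ := key p h0 hps
    exact ⟨q, hqA, hq⟩
  · intro p h0 hps
    exact key p h0 hps
end

section
/- Let X be a g-complete topological space, where g : X × X → ℝ is a continuous function such that for all x, y, z ∈ X: g(x,y) = 0 if and only if x = y, |g(x,y)| = |g(y,x)|, and |g(x,z)| ≤ |g(x,y)| + |g(y,z)|. Let (A, B) be a pair of nonempty subsets of X such that A_g is nonempty and g-closed. Let T : A → B be a topologically proximal weak contraction with respect to g with constants β ∈ (0,1) and N ≥ 0 satisfying 1 − β − N > 0, such that T(A_g) ⊆ B_g. Then T has exactly one best proximity point in A_g. -/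
open Filter Topology

theorem stmt_4 {X : Type*} [TopologicalSpace X] (g : X → X → ℝ)
    (hg : Continuous (Function.uncurry g))
    (hzero : ∀ x y : X, g x y = 0 ↔ x = y)
    (hsymm : ∀ x y : X, |g x y| = |g y x|)
    (htri : ∀ x y z : X, |g x z| ≤ |g x y| + |g y z|)
    (hcomp : GComplete g)
    (A B : Set X) (hA : A.Nonempty) (hB : B.Nonempty)
    (hAg : (proxA g A B).Nonempty) (hAgclosed : GClosed g (proxA g A B))
    (T : X → X) (hTAB : Set.MapsTo T A B)
    (β N : ℝ) (hβ : 0 < β) (hβ1 : β < 1) (hN : 0 ≤ N)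
    (hβN : 0 < 1 - β - N)
    (hT : TopProxWeakContraction g A B T β N)
    (hTprox : Set.MapsTo T (proxA g A B) (proxB g A B)) :
    ∃! p : X, p ∈ proxA g A B ∧ |g p (T p)| = Dg g A B := by
    classical
  set D := Dg g A B with hD
  have step : ∀ a : X, ∃ b : X, a ∈ proxA g A B → b ∈ proxA g A B ∧ |g b (T a)| = D := by
    intro a
    by_cases ha : a ∈ proxA g A B
    · obtain ⟨hTaB, u, huA, hu⟩ := hTprox ha
      exact ⟨u, fun _ => ⟨⟨huA, T a, hTaB, hu⟩, hu⟩⟩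
    · exact ⟨a, fun h => absurd h ha⟩
  choose F hF using step
  obtain ⟨x0, hx0⟩ := hAg
  let x : ℕ → X := fun n => Nat.rec x0 (fun _ b => F b) n
  have hxrec : ∀ n, x (n+1) = F (x n) := fun n => rfl
  have hxA : ∀ n, x n ∈ proxA g A B := by
    intro n; induction n with
    | zero => exact hx0
    | succ n ih => rw [hxrec]; exact (hF (x n) ih).1
  have hxD : ∀ n, |g (x (n+1)) (T (x n))| = D := by
    intro n; rw [hxrec]; exact (hF (x n) (hxA n)).2
  have hxA' : ∀ n, x n ∈ A := fun n => (hxA n).1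
  have hself : ∀ a : X, |g a a| = 0 := fun a => by
    rw [(hzero a a).mpr rfl]; simp
  set d : ℕ → ℝ := fun n => |g (x n) (x (n+1))| with hd
  have hdstep : ∀ n, d (n+1) ≤ β * d n := by
    intro n
    have h := hT (x n) (hxA' n) (x (n+1)) (hxA' (n+1)) (x (n+1)) (hxA' (n+1))
      (x (n+2)) (hxA' (n+2)) (hxD n) (hxD (n+1))
    simpa [hd, hself] using h
  have hd0 : 0 ≤ d 0 := abs_nonneg _
  have hdgeo : ∀ n, d n ≤ β^n * d 0 := by
    intro n; induction n with
    | zero => simp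
    | succ n ih =>
      calc d (n+1) ≤ β * d n := hdstep n
        _ ≤ β * (β^n * d 0) := by nlinarith
        _ = β^(n+1) * d 0 := by ring
  have hsum : ∀ k n, |g (x n) (x (n+k))| ≤ β^n * d 0 * (∑ i ∈ Finset.range k, β^i) := by
    intro k
    induction k with
    | zero => intro n; simp [hself]
    | succ k ih =>
      intro n
      have h1 := htri (x n) (x (n+k)) (x (n+k+1))
      have h2 : |g (x (n+k)) (x (n+k+1))| ≤ β^(n+k) * d 0 := hdgeo (n+k)
      have h3 := ih n
      have : |g (x n) (x (n+(k+1)))| ≤ β^n * d 0 * (∑ i ∈ Finset.range k, β^i) + β^(n+k) * d 0 := by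
        have hnk : n + (k+1) = (n+k)+1 := by ring
        rw [hnk]
        calc |g (x n) (x ((n+k)+1))| ≤ |g (x n) (x (n+k))| + |g (x (n+k)) (x ((n+k)+1))| :=
              htri _ _ _
          _ ≤ β^n * d 0 * (∑ i ∈ Finset.range k, β^i) + β^(n+k) * d 0 := add_le_add h3 h2
      calc |g (x n) (x (n+(k+1)))| ≤ β^n * d 0 * (∑ i ∈ Finset.range k, β^i) + β^(n+k) * d 0 :=
            this
        _ = β^n * d 0 * ((∑ i ∈ Finset.range k, β^i) + β^k) := by rw [pow_add]; ring
        _ = β^n * d 0 * (∑ i ∈ Finset.range (k+1), β^i) := by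
            rw [Finset.sum_range_succ]
  have h1β : 0 < 1 - β := by linarith
  have hgsum : ∀ k, (∑ i ∈ Finset.range k, β^i) ≤ (1-β)⁻¹ := by
    intro k
    have h := geom_sum_mul β k
    have hβk : 0 ≤ β^k := by positivity
    have key : (1-β) * (∑ i ∈ Finset.range k, β^i) ≤ 1 := by nlinarith
    calc (∑ i ∈ Finset.range k, β^i) = (1-β)⁻¹ * ((1-β) * (∑ i ∈ Finset.range k, β^i)) := by
          field_simp
      _ ≤ (1-β)⁻¹ * 1 := mul_le_mul_of_nonneg_left key (by positivity)
      _ = (1-β)⁻¹ := mul_one _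
  set C := d 0 * (1-β)⁻¹ with hC
  have hCnn : 0 ≤ C := mul_nonneg hd0 (by positivity)
  have hbound : ∀ n k, |g (x n) (x (n+k))| ≤ β^n * C := by
    intro n k
    calc |g (x n) (x (n+k))| ≤ β^n * d 0 * (∑ i ∈ Finset.range k, β^i) := hsum k n
      _ ≤ β^n * d 0 * (1-β)⁻¹ := by
          apply mul_le_mul_of_nonneg_left (hgsum k)
          positivity
      _ = β^n * C := by rw [hC]; ring
  have hbound' : ∀ n m, n ≤ m → |g (x n) (x m)| ≤ β^n * C := by
    intro n m hnm
    obtain ⟨k, rfl⟩ := Nat.exists_eq_add_of_le hnm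
    exact hbound n k
  have htend0 : Tendsto (fun n => β^n * C) atTop (𝓝 0) := by
    have := (tendsto_pow_atTop_nhds_zero_of_lt_one hβ.le hβ1).mul_const C
    simpa using this
  have hcauchy : GCauchy g x := by
    intro ε hε
    obtain ⟨k, hk⟩ := Filter.eventually_atTop.mp (htend0.eventually (gt_mem_nhds hε))
    refine ⟨k, fun n hn m hm => ?_⟩
    rcases le_total n m with h | h
    · exact lt_of_le_of_lt (hbound' n m h) (hk n hn)
    · rw [hsymm]
      exact lt_of_le_of_lt (hbound' m n h) (hk m hm)
  obtain ⟨p, hp⟩ := hcomp x hcauchy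
  have hpA : p ∈ proxA g A B := hAgclosed x hxA p hp
  obtain ⟨hTpB, u, huA, huD⟩ := hTprox hpA
  have hpu : |g p u| = 0 := by
    have hbnd : ∀ n, |g p u| ≤ (1+N) * |g (x (n+1)) p| + β * |g (x n) p| := by
      intro n
      have h1 := hT (x n) (hxA' n) p hpA.1 (x (n+1)) (hxA' (n+1)) u huA (hxD n) huD
      have h2 := htri p (x (n+1)) u
      have h3 := hsymm p (x (n+1))
      rw [h3] at h1 h2
      nlinarith
    have htendR : Tendsto (fun n => (1+N) * |g (x (n+1)) p| + β * |g (x n) p|)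
        atTop (𝓝 0) := by
      have h1 : Tendsto (fun n => |g (x (n+1)) p|) atTop (𝓝 0) :=
        hp.comp (tendsto_add_atTop_nat 1)
      have := (h1.const_mul (1+N)).add (hp.const_mul β)
      simpa using this
    have hle : |g p u| ≤ 0 := ge_of_tendsto htendR (Filter.Eventually.of_forall hbnd)
    linarith [abs_nonneg (g p u)]
  have hup : u = p := ((hzero p u).mp (abs_eq_zero.mp hpu)).symm
  rw [hup] at huD
  refine ⟨p, ⟨hpA, huD⟩, ?_⟩
  rintro q ⟨hqA, hqD⟩
  have h := hT q hqA.1 p hpA.1 q hqA.1 p hpA.1 hqD huD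
  have hs := hsymm p q
  have hz : |g q p| = 0 := by nlinarith [abs_nonneg (g q p)]
  exact (hzero q p).mp (abs_eq_zero.mp hz)
end

section
/- Let X be a topological space, g : X × X → ℝ a continuous function, and H : X × X × [0,1] → X a topologically convex structure on X with respect to g. Let A and B be nonempty subsets of X such that A is topologically r-starshaped, B is topologically s-starshaped, and |g(r,s)| = D_g(A,B). Then A_g is topologically r-starshaped and B_g is topologically s-starshaped. -/
open Filter Topology

/-- `H` is a topologically convex structure on `X` with respect to `g`. -/
def TopConvexStructure {X : Type*} [TopologicalSpace X] (g : X → X → ℝ)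
    (H : X → X → ℝ → X) : Prop :=
  Continuous (fun p : X × X × ℝ => H p.1 p.2.1 p.2.2) ∧
    (∀ x₀ x y : X, ∀ t ∈ Set.Icc (0 : ℝ) 1,
      |g x₀ (H x y t)| ≤ t * |g x₀ x| + (1 - t) * |g x₀ y|) ∧
    (∀ x x₀ y y₀ : X, ∀ t ∈ Set.Icc (0 : ℝ) 1,
      |g (H x y t) (H x₀ y₀ t)| ≤ t * |g x x₀| + (1 - t) * |g y y₀|)

/-- A nonempty subset `S` of `X` is topologically `r`-starshaped with respect to `H`. -/
def TopStarshaped {X : Type*} (H : X → X → ℝ → X) (r : X) (S : Set X) : Prop :=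
  r ∈ S ∧ ∀ x ∈ S, ∀ t ∈ Set.Icc (0 : ℝ) 1, H r x t ∈ S

theorem stmt_5 {X : Type*} [TopologicalSpace X] (g : X → X → ℝ)
    (hg : Continuous (Function.uncurry g))
    (H : X → X → ℝ → X) (hH : TopConvexStructure g H)
    (A B : Set X) (hA : A.Nonempty) (hB : B.Nonempty)
    (r s : X) (hAr : TopStarshaped H r A) (hBs : TopStarshaped H s B)
    (hrs : |g r s| = Dg g A B) :
    TopStarshaped H r (proxA g A B) ∧ TopStarshaped H s (proxB g A B) := by
  have hle : ∀ x ∈ A, ∀ y ∈ B, Dg g A B ≤ |g x y| := by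
    intro x hx y hy
    apply csInf_le
    · exact ⟨0, fun z hz => by obtain ⟨a, _, b, _, rfl⟩ := hz; exact abs_nonneg _⟩
    · exact ⟨x, hx, y, hy, rfl⟩
  obtain ⟨_, hH1, hH2⟩ := hH
  have key : ∀ x ∈ A, ∀ y ∈ B, |g x y| = Dg g A B → ∀ t ∈ Set.Icc (0:ℝ) 1,
      |g (H r x t) (H s y t)| = Dg g A B := by
    intro x hx y hy hxy t ht
    have h1 : |g (H r x t) (H s y t)| ≤ t * |g r s| + (1 - t) * |g x y| :=
      hH2 r s x y t ht
    rw [hrs, hxy] at h1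
    have h2 : Dg g A B ≤ |g (H r x t) (H s y t)| :=
      hle _ (hAr.2 x hx t ht) _ (hBs.2 y hy t ht)
    have : t * Dg g A B + (1 - t) * Dg g A B = Dg g A B := by ring
    linarith
  refine ⟨⟨⟨hAr.1, s, hBs.1, hrs⟩, ?_⟩, ⟨hBs.1, r, hAr.1, hrs⟩, ?_⟩
  · rintro x ⟨hx, y, hy, hxy⟩ t ht
    exact ⟨hAr.2 x hx t ht, H s y t, hBs.2 y hy t ht, key x hx y hy hxy t ht⟩
  · rintro y ⟨hy, x, hx, hxy⟩ t ht
    exact ⟨hBs.2 y hy t ht, H r x t, hAr.2 x hx t ht, key x hx y hy hxy t ht⟩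
end

section
/- Let X be a topological space and g : X × X → ℝ a continuous function. Let (A, B) be a pair of nonempty subsets of X which is a topologically semi-sharp proximinal pair with respect to g and such that A_g and B_g are nonempty. Then (A_g, B_g) is a topologically semi-sharp proximinal pair with respect to g, i.e., for each x ∈ A_g there exists at most one y ∈ B_g with |g(x,y)| = D_g(A_g, B_g). -/
open Filter Topology

/-- `(A, B)` is a topologically semi-sharp proximinal pair with respect to `g`:
for each `x ∈ A` there is at most one `x* ∈ B` with `|g x x*| = D_g(A,B)`. -/
def TopSemiSharpProximinal {X : Type*} (g : X → X → ℝ) (A B : Set X) : Prop :=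
  ∀ x ∈ A, ∀ y₁ ∈ B, ∀ y₂ ∈ B,
    |g x y₁| = Dg g A B → |g x y₂| = Dg g A B → y₁ = y₂

lemma Dg_le {X : Type*} (g : X → X → ℝ) (A B : Set X) {x y : X}
    (hx : x ∈ A) (hy : y ∈ B) : Dg g A B ≤ |g x y| := by
  apply csInf_le
  · exact ⟨0, fun r ⟨a, _, b, _, hr⟩ => hr ▸ abs_nonneg _⟩
  · exact ⟨x, hx, y, hy, rfl⟩

lemma Dg_prox_eq {X : Type*} (g : X → X → ℝ) (A B : Set X)
    (hAg : (proxA g A B).Nonempty) :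
    Dg g (proxA g A B) (proxB g A B) = Dg g A B := by
  obtain ⟨x, hxA, y, hyB, hxy⟩ := hAg
  have hxAg : x ∈ proxA g A B := ⟨hxA, y, hyB, hxy⟩
  have hyBg : y ∈ proxB g A B := ⟨hyB, x, hxA, hxy⟩
  apply le_antisymm
  · calc Dg g (proxA g A B) (proxB g A B) ≤ |g x y| := Dg_le g _ _ hxAg hyBg
      _ = Dg g A B := hxy
  · refine le_csInf ⟨|g x y|, x, hxAg, y, hyBg, rfl⟩ ?_
    rintro r ⟨a, ⟨haA, -⟩, b, ⟨hbB, -⟩, rfl⟩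
    exact Dg_le g A B haA hbB

theorem stmt_6 {X : Type*} [TopologicalSpace X] (g : X → X → ℝ)
    (hg : Continuous (Function.uncurry g))
    (A B : Set X) (hA : A.Nonempty) (hB : B.Nonempty)
    (hpair : TopSemiSharpProximinal g A B)
    (hAg : (proxA g A B).Nonempty) (hBg : (proxB g A B).Nonempty) :
    TopSemiSharpProximinal g (proxA g A B) (proxB g A B) := by
  intro x hx y₁ hy₁ y₂ hy₂ h1 h2
  rw [Dg_prox_eq g A B hAg] at h1 h2
  exact hpair x hx.1 y₁ hy₁.1 y₂ hy₂.1 h1 h2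
end

section
/- Let g : ℝ² × ℝ² → ℝ be defined by g((x,y),(u,v)) = y − v (with ℝ² carrying the usual topology). Then ℝ² is g-complete, the mapping T : ℝ² → ℝ² defined by T(x,y) = (x, y/2) satisfies |g(T(p), T(q))| = (1/2)|g(p,q)| for all p, q ∈ ℝ² (so T is a topologically Banach contraction with respect to g), and for every x ∈ ℝ the point (x, 0) is a fixed point of T; in particular T has infinitely many fixed points. -/
open Filter Topology

/-- `g((x,y),(u,v)) = y - v` on `ℝ² × ℝ²`. -/
def g10 : ℝ × ℝ → ℝ × ℝ → ℝ := fun p q => p.2 - q.2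

/-- `T(x,y) = (x, y/2)`. -/
noncomputable def T10 : ℝ × ℝ → ℝ × ℝ := fun p => (p.1, p.2 / 2)

theorem stmt_10 :
    GComplete g10 ∧
    (∀ p q : ℝ × ℝ, |g10 (T10 p) (T10 q)| = (1 / 2) * |g10 p q|) ∧
    (∃ α : ℝ, 0 < α ∧ α < 1 ∧ ∀ p q : ℝ × ℝ, |g10 (T10 p) (T10 q)| ≤ α * |g10 p q|) ∧
    (∀ x : ℝ, T10 (x, 0) = (x, 0)) ∧
    {p : ℝ × ℝ | T10 p = p}.Infinite := by
  refine ⟨?_, ?_, ⟨1/2, by norm_num, by norm_num, fun p q => ?_⟩, fun x => ?_, ?_⟩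
  · intro x hx
    have hc : CauchySeq (fun n => (x n).2) := by
      rw [Metric.cauchySeq_iff]
      intro ε hε
      obtain ⟨k, hk⟩ := hx ε hε
      exact ⟨k, fun n hn m hm => by simpa [Real.dist_eq, g10] using hk n hn m hm⟩
    obtain ⟨L, hL⟩ := cauchySeq_tendsto_of_complete hc
    refine ⟨(0, L), ?_⟩
    have : Tendsto (fun n => (x n).2 - L) atTop (𝓝 0) := by
      simpa using hL.sub_const L
    simpa [GConv, g10] using this.abs
  · intro p q
    have : T10 p = (p.1, p.2/2) := rfl
    simp only [g10, T10]
    rw [div_sub_div_same, abs_div]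
    simp; ring
  · have : (p.2/2 - q.2/2) = (p.2 - q.2)/2 := by ring
    simp only [g10, T10, this]
    rw [abs_div]
    simp; nlinarith [abs_nonneg (p.2 - q.2)]
  · simp [T10]
  · apply Set.infinite_of_injective_forall_mem (f := fun x : ℝ => (x, (0:ℝ)))
    · intro a b h
      exact ((Prod.mk.injEq _ _ _ _).mp h).1
    · intro a
      simp [Set.mem_setOf_eq, T10]
end
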